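/- Let f be a Stieltjes function f(z) = ∫₀^∞ dμ(t)/(t+z) and A a Hermitian positive definite matrix with smallest eigenvalue λ_min. Then for all matrices E, Z with ‖E‖_F = ‖Z‖_F = 1, the Frobenius norm of the second-order Fréchet derivative L_f^{(2)}(A, E, Z) = ∫₀^∞ [R_t E R_t Z R_t + R_t Z R_t E R_t] dμ(t), with R_t = (A+tI)^{-1}, is bounded above by 2∫₀^∞ dμ(t)/(λ_min+t)³ = |f''(λ_min)|. -/

import Mathlib

open Matrix MeasureTheory
open scoped ComplexOrder

attribute [local instance] Matrix.frobeniusNormedAddCommGroup Matrix.frobeniusNormedRing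
  Matrix.frobeniusNormedAlgebra

noncomputable def enorm' {n : ℕ} (v : Fin n → ℂ) : ℝ :=
  ‖(WithLp.equiv 2 (Fin n → ℂ)).symm v‖

lemma enorm'_nonneg {n : ℕ} (v : Fin n → ℂ) : 0 ≤ enorm' v := norm_nonneg _

lemma enorm'_sq {n : ℕ} (v : Fin n → ℂ) :
    enorm' v ^ 2 = RCLike.re (star v ⬝ᵥ v) := by
  rw [enorm', ← inner_self_eq_norm_sq (𝕜 := ℂ), dotProduct_comm]
  rfl

lemma enorm'_sq_sum {n : ℕ} (v : Fin n → ℂ) :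
    enorm' v ^ 2 = ∑ i, ‖v i‖ ^ 2 := by
  rw [enorm', EuclideanSpace.norm_eq, Real.sq_sqrt]
  · rfl
  · positivity

lemma cs_re {n : ℕ} (v w : Fin n → ℂ) :
    RCLike.re (star v ⬝ᵥ w) ≤ enorm' v * enorm' w := by
  have h := re_inner_le_norm (𝕜 := ℂ) ((WithLp.equiv 2 (Fin n → ℂ)).symm v)
    ((WithLp.equiv 2 (Fin n → ℂ)).symm w)
  rw [dotProduct_comm]
  exact h

lemma frob_sq {n : ℕ} (M : Matrix (Fin n) (Fin n) ℂ) :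
    ‖M‖ ^ 2 = ∑ i, ∑ j, ‖M i j‖ ^ 2 := by
  have h : (0:ℝ) ≤ ∑ i, ∑ j, ‖M i j‖ ^ 2 := by positivity
  rw [Matrix.frobenius_norm_def]
  have key : ∀ x : ℝ, x ^ (2:ℝ) = x ^ 2 := fun x => by
    rw [← Real.rpow_natCast x 2]; norm_num
  simp_rw [key]
  rw [← Real.sqrt_eq_rpow, Real.sq_sqrt (by positivity)]

lemma sub_smul_posSemidef {n : ℕ} {A : Matrix (Fin n) (Fin n) ℂ} (hA : A.IsHermitian)
    (lam : ℝ) (hl : ∀ i, lam ≤ hA.eigenvalues i) :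
    (A - (lam : ℂ) • 1).PosSemidef := by
  set U : Matrix (Fin n) (Fin n) ℂ := (hA.eigenvectorUnitary : Matrix (Fin n) (Fin n) ℂ)
  have hU : U * star U = 1 := (Matrix.mem_unitaryGroup_iff).mp hA.eigenvectorUnitary.2
  have hrep : A - (lam : ℂ) • 1 =
      U * Matrix.diagonal (fun i => ((hA.eigenvalues i - lam : ℝ) : ℂ)) * star U := by
    have hdiag : Matrix.diagonal (fun i => ((hA.eigenvalues i - lam : ℝ) : ℂ)) =
        Matrix.diagonal (RCLike.ofReal ∘ hA.eigenvalues) - (lam : ℂ) • 1 := by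
      rw [Matrix.smul_one_eq_diagonal]
      ext i j
      by_cases h : i = j <;>
        simp [h, Matrix.diagonal_apply, Matrix.sub_apply, Complex.ofReal_sub]
    rw [hdiag, Matrix.mul_sub, Matrix.sub_mul, Matrix.mul_smul, Matrix.mul_one,
      Matrix.smul_mul, hU]
    congr 1
    exact hA.spectral_theorem
  rw [hrep]
  have hd : (Matrix.diagonal (fun i => ((hA.eigenvalues i - lam : ℝ) : ℂ))).PosSemidef :=
    Matrix.posSemidef_diagonal_iff.mpr fun i => by
      rw [Complex.zero_le_real]
      linarith [hl i]
  simpa [Matrix.star_eq_conjTranspose] using hd.mul_mul_conjTranspose_same U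

lemma quad_lower {n : ℕ} {A : Matrix (Fin n) (Fin n) ℂ} (hA : A.IsHermitian)
    (lam : ℝ) (hl : ∀ i, lam ≤ hA.eigenvalues i) (x : Fin n → ℂ) :
    lam * RCLike.re (star x ⬝ᵥ x) ≤ RCLike.re (star x ⬝ᵥ A *ᵥ x) := by
  have h0 := (sub_smul_posSemidef hA lam hl).re_dotProduct_nonneg x
  rw [Matrix.sub_mulVec, dotProduct_sub, map_sub] at h0
  have h1 : ((lam : ℂ) • (1 : Matrix (Fin n) (Fin n) ℂ)) *ᵥ x = (lam : ℂ) • x := by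
    rw [Matrix.smul_mulVec, Matrix.one_mulVec]
  rw [h1] at h0
  have h2 : RCLike.re (star x ⬝ᵥ ((lam : ℂ) • x)) = lam * RCLike.re (star x ⬝ᵥ x) := by
    rw [dotProduct_smul]
    simp [smul_eq_mul, Complex.mul_re, RCLike.re_to_complex]
  linarith

lemma inv_mulVec_bound {n : ℕ} {B : Matrix (Fin n) (Fin n) ℂ} (hB : B.PosDef)
    {m : ℝ} (hm : 0 < m)
    (hq : ∀ y : Fin n → ℂ, m * RCLike.re (star y ⬝ᵥ y) ≤ RCLike.re (star y ⬝ᵥ B *ᵥ y))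
    (x : Fin n → ℂ) : enorm' (B⁻¹ *ᵥ x) ≤ m⁻¹ * enorm' x := by
  set v := B⁻¹ *ᵥ x with hv
  have hBv : B *ᵥ v = x := by
    rw [hv, Matrix.mulVec_mulVec, Matrix.mul_nonsing_inv _ hB.det_pos.ne'.isUnit,
      Matrix.one_mulVec]
  have key : m * enorm' v ^ 2 ≤ enorm' v * enorm' x := by
    calc m * enorm' v ^ 2 = m * RCLike.re (star v ⬝ᵥ v) := by rw [enorm'_sq]
    _ ≤ RCLike.re (star v ⬝ᵥ B *ᵥ v) := hq v
    _ = RCLike.re (star v ⬝ᵥ x) := by rw [hBv]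
    _ ≤ enorm' v * enorm' x := cs_re v x
  rcases eq_or_lt_of_le (enorm'_nonneg v) with h | h
  · rw [← h]
    exact mul_nonneg (inv_nonneg.mpr hm.le) (enorm'_nonneg x)
  · have h3 : m * enorm' v ≤ enorm' x := by
      have hkey : (m * enorm' v) * enorm' v ≤ enorm' x * enorm' v := by nlinarith [key]
      exact le_of_mul_le_mul_right hkey h
    calc enorm' v = m⁻¹ * (m * enorm' v) := by field_simp
      _ ≤ m⁻¹ * enorm' x := mul_le_mul_of_nonneg_left h3 (inv_nonneg.mpr hm.le)

lemma inv_mul_bound {n : ℕ} {B : Matrix (Fin n) (Fin n) ℂ} (hB : B.PosDef)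
    {m : ℝ} (hm : 0 < m)
    (hq : ∀ y : Fin n → ℂ, m * RCLike.re (star y ⬝ᵥ y) ≤ RCLike.re (star y ⬝ᵥ B *ᵥ y))
    (M : Matrix (Fin n) (Fin n) ℂ) : ‖B⁻¹ * M‖ ≤ m⁻¹ * ‖M‖ := by
  have h2 : ‖B⁻¹ * M‖ ^ 2 ≤ (m⁻¹ * ‖M‖) ^ 2 := by
    rw [frob_sq, mul_pow]
    calc ∑ i, ∑ j, ‖(B⁻¹ * M) i j‖ ^ 2
        = ∑ j, ∑ i, ‖(B⁻¹ *ᵥ fun k => M k j) i‖ ^ 2 := by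
          rw [Finset.sum_comm]; rfl
      _ = ∑ j, enorm' (B⁻¹ *ᵥ fun k => M k j) ^ 2 := by simp_rw [enorm'_sq_sum]
      _ ≤ ∑ j, (m⁻¹ * enorm' fun k => M k j) ^ 2 := by
          refine Finset.sum_le_sum fun j _ => ?_
          have := inv_mulVec_bound hB hm hq (fun k => M k j)
          have h0 := enorm'_nonneg (B⁻¹ *ᵥ fun k => M k j)
          nlinarith
      _ = m⁻¹ ^ 2 * ∑ j, enorm' (fun k => M k j) ^ 2 := by
          rw [Finset.mul_sum]; ring_nf
      _ = m⁻¹ ^ 2 * ‖M‖ ^ 2 := by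
          rw [frob_sq, Finset.sum_comm]
          simp_rw [enorm'_sq_sum]
  have hn1 : (0:ℝ) ≤ ‖B⁻¹ * M‖ := norm_nonneg _
  have hn2 : (0:ℝ) ≤ m⁻¹ * ‖M‖ := by positivity
  nlinarith

lemma mul_inv_bound {n : ℕ} {B : Matrix (Fin n) (Fin n) ℂ} (hB : B.PosDef)
    {m : ℝ} (hm : 0 < m)
    (hq : ∀ y : Fin n → ℂ, m * RCLike.re (star y ⬝ᵥ y) ≤ RCLike.re (star y ⬝ᵥ B *ᵥ y))
    (M : Matrix (Fin n) (Fin n) ℂ) : ‖M * B⁻¹‖ ≤ m⁻¹ * ‖M‖ := by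
  have h1 : B⁻¹ᴴ = B⁻¹ := by
    rw [Matrix.conjTranspose_nonsing_inv, hB.isHermitian.eq]
  calc ‖M * B⁻¹‖ = ‖(M * B⁻¹)ᴴ‖ := (Matrix.frobenius_norm_conjTranspose _).symm
    _ = ‖B⁻¹ * Mᴴ‖ := by rw [Matrix.conjTranspose_mul, h1]
    _ ≤ m⁻¹ * ‖Mᴴ‖ := inv_mul_bound hB hm hq _
    _ = m⁻¹ * ‖M‖ := by rw [Matrix.frobenius_norm_conjTranspose]

/-- For a Stieltjes function `f`, Hermitian positive definite `A` with smallest eigenvalue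
`λ_min`, and unit Frobenius norm matrices `E, Z`, the Frobenius norm of the second-order
Fréchet derivative `L_f^{(2)}(A,E,Z) = ∫₀^∞ (R_t E R_t Z R_t + R_t Z R_t E R_t) dμ(t)`,
with `R_t = (A+tI)⁻¹`, is bounded above by `2 ∫₀^∞ dμ(t)/(λ_min+t)³`. -/
theorem frobNorm_second_order_frechet_le {n : ℕ} (μ : Measure ℝ)
    (hsupp : μ (Set.Iio 0) = 0) (A : Matrix (Fin n) (Fin n) ℂ) (hA : A.PosDef)
    (lam : ℝ) (hlam : IsLeast (Set.range hA.isHermitian.eigenvalues) lam)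
    (hint : Integrable (fun t : ℝ => ((lam + t) ^ 3)⁻¹) μ)
    (E Z : Matrix (Fin n) (Fin n) ℂ) (hE : ‖E‖ = 1) (hZ : ‖Z‖ = 1)
    (hintM : @Integrable _ _ SeminormedAddGroup.toContinuousENorm _ _ (fun t : ℝ =>
      (A + (t : ℂ) • 1)⁻¹ * E * (A + (t : ℂ) • 1)⁻¹ * Z * (A + (t : ℂ) • 1)⁻¹ +
        (A + (t : ℂ) • 1)⁻¹ * Z * (A + (t : ℂ) • 1)⁻¹ * E * (A + (t : ℂ) • 1)⁻¹) μ) :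
    ‖∫ t : ℝ,
        ((A + (t : ℂ) • 1)⁻¹ * E * (A + (t : ℂ) • 1)⁻¹ * Z * (A + (t : ℂ) • 1)⁻¹ +
          (A + (t : ℂ) • 1)⁻¹ * Z * (A + (t : ℂ) • 1)⁻¹ * E * (A + (t : ℂ) • 1)⁻¹) ∂μ‖ ≤
      2 * ∫ t : ℝ, ((lam + t) ^ 3)⁻¹ ∂μ := by
  obtain ⟨i, hi⟩ := hlam.1
  have hlampos : 0 < lam := hi ▸ hA.eigenvalues_pos i
  have hl : ∀ j, lam ≤ hA.isHermitian.eigenvalues j := fun j => hlam.2 ⟨j, rfl⟩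
  have hae : ∀ᵐ t ∂μ, 0 ≤ t := by
    refine ae_iff.mpr ?_
    have hset : {a : ℝ | ¬ 0 ≤ a} = Set.Iio 0 := by ext a; simp [not_le]
    rw [hset]; exact hsupp
  have hbound : ∀ t : ℝ, 0 ≤ t →
      ‖(A + (t : ℂ) • 1)⁻¹ * E * (A + (t : ℂ) • 1)⁻¹ * Z * (A + (t : ℂ) • 1)⁻¹ +
        (A + (t : ℂ) • 1)⁻¹ * Z * (A + (t : ℂ) • 1)⁻¹ * E * (A + (t : ℂ) • 1)⁻¹‖ ≤
        2 * ((lam + t) ^ 3)⁻¹ := by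
    intro t ht
    set B : Matrix (Fin n) (Fin n) ℂ := A + (t : ℂ) • 1 with hBdef
    set m : ℝ := lam + t with hmdef
    have hm : 0 < m := by positivity
    have hPSD : ((t : ℂ) • (1 : Matrix (Fin n) (Fin n) ℂ)).PosSemidef := by
      rw [Matrix.smul_one_eq_diagonal]
      exact Matrix.posSemidef_diagonal_iff.mpr fun i => Complex.zero_le_real.mpr ht
    have hBpd : B.PosDef := hA.add_posSemidef hPSD
    have hq : ∀ y : Fin n → ℂ,
        m * RCLike.re (star y ⬝ᵥ y) ≤ RCLike.re (star y ⬝ᵥ B *ᵥ y) := by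
      intro y
      have h1 := quad_lower hA.isHermitian lam hl y
      have h2 : B *ᵥ y = A *ᵥ y + (t : ℂ) • y := by
        rw [hBdef, Matrix.add_mulVec, Matrix.smul_mulVec, Matrix.one_mulVec]
      rw [h2, dotProduct_add, map_add]
      have h3 : RCLike.re (star y ⬝ᵥ ((t : ℂ) • y)) = t * RCLike.re (star y ⬝ᵥ y) := by
        rw [dotProduct_smul]
        simp [smul_eq_mul, Complex.mul_re, RCLike.re_to_complex]
      rw [h3, hmdef, add_mul]
      linarith
    have L := inv_mul_bound hBpd hm hq
    have Rb := mul_inv_bound hBpd hm hq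
    have hminv : 0 ≤ m⁻¹ := inv_nonneg.mpr hm.le
    have term : ∀ X Y : Matrix (Fin n) (Fin n) ℂ, ‖X‖ = 1 → ‖Y‖ = 1 →
        ‖B⁻¹ * X * B⁻¹ * Y * B⁻¹‖ ≤ m⁻¹ * (m⁻¹ * m⁻¹) := by
      intro X Y hX hY
      have e1 : ‖B⁻¹ * X‖ ≤ m⁻¹ := by simpa [hX] using L X
      have e2 : ‖B⁻¹ * X * B⁻¹‖ ≤ m⁻¹ * m⁻¹ :=
        (Rb _).trans (mul_le_mul_of_nonneg_left e1 hminv)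
      have e3 : ‖B⁻¹ * X * B⁻¹ * Y‖ ≤ m⁻¹ * m⁻¹ := by
        calc ‖B⁻¹ * X * B⁻¹ * Y‖ ≤ ‖B⁻¹ * X * B⁻¹‖ * ‖Y‖ := norm_mul_le _ _
          _ = ‖B⁻¹ * X * B⁻¹‖ := by rw [hY, mul_one]
          _ ≤ m⁻¹ * m⁻¹ := e2
      exact (Rb _).trans (mul_le_mul_of_nonneg_left e3 hminv)
    have hfinal : m⁻¹ * (m⁻¹ * m⁻¹) = ((lam + t) ^ 3)⁻¹ := by
      rw [hmdef, ← mul_inv, ← mul_inv]; congr 1; ring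
    calc ‖B⁻¹ * E * B⁻¹ * Z * B⁻¹ + B⁻¹ * Z * B⁻¹ * E * B⁻¹‖
        ≤ ‖B⁻¹ * E * B⁻¹ * Z * B⁻¹‖ + ‖B⁻¹ * Z * B⁻¹ * E * B⁻¹‖ := norm_add_le _ _
      _ ≤ m⁻¹ * (m⁻¹ * m⁻¹) + m⁻¹ * (m⁻¹ * m⁻¹) := add_le_add (term E Z hE hZ) (term Z E hZ hE)
      _ = 2 * ((lam + t) ^ 3)⁻¹ := by rw [hfinal]; ring
  calc ‖∫ t : ℝ,
        ((A + (t : ℂ) • 1)⁻¹ * E * (A + (t : ℂ) • 1)⁻¹ * Z * (A + (t : ℂ) • 1)⁻¹ +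
          (A + (t : ℂ) • 1)⁻¹ * Z * (A + (t : ℂ) • 1)⁻¹ * E * (A + (t : ℂ) • 1)⁻¹) ∂μ‖
      ≤ ∫ t : ℝ,
        ‖(A + (t : ℂ) • 1)⁻¹ * E * (A + (t : ℂ) • 1)⁻¹ * Z * (A + (t : ℂ) • 1)⁻¹ +
          (A + (t : ℂ) • 1)⁻¹ * Z * (A + (t : ℂ) • 1)⁻¹ * E * (A + (t : ℂ) • 1)⁻¹‖ ∂μ :=
        norm_integral_le_integral_norm _
    _ ≤ ∫ t : ℝ, 2 * ((lam + t) ^ 3)⁻¹ ∂μ := by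
        refine integral_mono_ae hintM.norm (hint.const_mul 2) ?_
        exact hae.mono fun t ht => hbound t ht
    _ = 2 * ∫ t : ℝ, ((lam + t) ^ 3)⁻¹ ∂μ := by rw [integral_const_mul]
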